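/- Let m be Lebesgue measure on [0,1] and define P : L¹([0,1]) → L¹([0,1]) by Pf(x) = 2f(2x) for x ∈ [0,1/2] and Pf(x) = 0 for x ∈ (1/2,1]. Then P is a stochastic operator, so the bounded operator A = I − P satisfies ∫₀¹ Af dm = 0 for every f ∈ L¹([0,1]); nevertheless the semigroup T(t) = e^{tA} is not positive. Specifically, for f = 1_{(1/2,1]} one has Pᵏf = 2ᵏ 1_{(2^{−k−1}, 2^{−k}]} for every k ≥ 0, hence T(t)f = e^{t}·((−t)ᵏ 2ᵏ/k!) a.e. on (2^{−k−1}, 2^{−k}], which is strictly negative for every t > 0 and every odd k; in particular for each t > 0 the function T(t)f is negative on a set of positive Lebesgue measure. -/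

import Mathlib

open MeasureTheory Filter Topology

lemma ae_double {Q : ℝ → Prop}
    (h : ∀ᵐ x ∂(volume.restrict (Set.Icc (0:ℝ) 1)), Q x) :
    ∀ᵐ x ∂(volume.restrict (Set.Icc (0:ℝ) 1)), x ≤ 1/2 → Q (2*x) := by
  rw [ae_iff] at h ⊢
  rw [Measure.restrict_apply' measurableSet_Icc] at h ⊢
  have hnull : volume ((fun x : ℝ => 2*x) ⁻¹' ({x | ¬ Q x} ∩ Set.Icc 0 1)) = 0 := by
    rw [Real.volume_preimage_mul_left (two_ne_zero), h, mul_zero]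
  refine measure_mono_null ?_ hnull
  rintro x ⟨hx1, hx2⟩
  push_neg at hx1
  obtain ⟨hle, hQ⟩ := hx1
  have h0 : (0:ℝ) ≤ 2*x := by linarith [hx2.1]
  have h1 : (2:ℝ)*x ≤ 1 := by linarith
  exact Set.mem_preimage.2 ⟨hQ, h0, h1⟩

lemma Lp_coeFn_sum {μ : Measure ℝ} (f : ℕ → Lp ℝ 1 μ) (s : Finset ℕ) :
    ⇑(∑ n ∈ s, f n) =ᵐ[μ] fun x => ∑ n ∈ s, f n x := by
  induction s using Finset.induction with
  | empty => simp only [Finset.sum_empty]; exact Lp.coeFn_zero (E := ℝ) (p := 1) (μ := μ)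
  | @insert a s ha ih =>
    rw [Finset.sum_insert ha]
    filter_upwards [Lp.coeFn_add (f a) (∑ n ∈ s, f n), ih] with x h1 h2
    rw [Finset.sum_insert ha, h1]; simp only [Pi.add_apply, h2]

lemma two_pow_inv_le_half (j : ℕ) : ((2:ℝ)^(j+1))⁻¹ ≤ 1/2 := by
  rw [show (1:ℝ)/2 = ((2:ℝ)^1)⁻¹ by norm_num]
  exact inv_anti₀ (by norm_num) (pow_le_pow_right₀ one_le_two (by omega))

lemma ind_step (k : ℕ) (x : ℝ) :
    (if x ≤ 1/2 then
      2 * (Set.Ioc (((2:ℝ)^(k+1))⁻¹) (((2:ℝ)^k)⁻¹)).indicator (fun _ => (2:ℝ)^k) (2*x) else 0)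
    = (Set.Ioc (((2:ℝ)^(k+1+1))⁻¹) (((2:ℝ)^(k+1))⁻¹)).indicator (fun _ => (2:ℝ)^(k+1)) x := by
  have hk : (0:ℝ) < 2^k := by positivity
  have e1 : ((2:ℝ)^(k+1))⁻¹ = ((2:ℝ)^k)⁻¹/2 := by rw [pow_succ, mul_inv]; ring
  have e2 : ((2:ℝ)^(k+1+1))⁻¹ = ((2:ℝ)^k)⁻¹/4 := by
    rw [pow_succ, pow_succ, mul_inv, mul_inv]; ring
  have hmem : x ∈ Set.Ioc (((2:ℝ)^(k+1+1))⁻¹) (((2:ℝ)^(k+1))⁻¹) ↔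
      2*x ∈ Set.Ioc (((2:ℝ)^(k+1))⁻¹) (((2:ℝ)^k)⁻¹) := by
    simp only [Set.mem_Ioc, e1, e2]
    constructor <;> rintro ⟨h1, h2⟩ <;> exact ⟨by linarith, by linarith⟩
  by_cases hx : x ≤ 1/2
  · rw [if_pos hx]
    by_cases hm : x ∈ Set.Ioc (((2:ℝ)^(k+1+1))⁻¹) (((2:ℝ)^(k+1))⁻¹)
    · rw [Set.indicator_of_mem hm, Set.indicator_of_mem (hmem.1 hm), pow_succ]; ring
    · rw [Set.indicator_of_notMem hm, Set.indicator_of_notMem (fun c => hm (hmem.2 c)),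
        mul_zero]
  · rw [if_neg hx, Set.indicator_of_notMem]
    rintro ⟨h1, h2⟩
    have := two_pow_inv_le_half k
    linarith

lemma sum_ind (c : ℕ → ℝ) (k N : ℕ) (hN : k < N) (x : ℝ)
    (hx : x ∈ Set.Ioc (((2:ℝ)^(k+1))⁻¹) (((2:ℝ)^k)⁻¹)) :
    ∑ n ∈ Finset.range N,
      c n * (Set.Ioc (((2:ℝ)^(n+1))⁻¹) (((2:ℝ)^n)⁻¹)).indicator (fun _ => (2:ℝ)^n) x
      = c k * 2^k := by
  rw [Finset.sum_eq_single k]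
  · rw [Set.indicator_of_mem hx]
  · intro n _ hne
    have hnot : x ∉ Set.Ioc (((2:ℝ)^(n+1))⁻¹) (((2:ℝ)^n)⁻¹) := by
      rintro ⟨h1, h2⟩
      rcases lt_or_gt_of_ne hne with h | h
      · have : ((2:ℝ)^k)⁻¹ ≤ ((2:ℝ)^(n+1))⁻¹ :=
          inv_anti₀ (by positivity) (pow_le_pow_right₀ one_le_two (by omega))
        linarith [hx.2]
      · have : ((2:ℝ)^n)⁻¹ ≤ ((2:ℝ)^(k+1))⁻¹ :=
          inv_anti₀ (by positivity) (pow_le_pow_right₀ one_le_two (by omega))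
        linarith [hx.1]
    rw [Set.indicator_of_notMem hnot, mul_zero]
  · intro h; exact absurd (Finset.mem_range.2 hN) h

lemma integral_ite (g : ℝ → ℝ)
    (hInt : Integrable (fun x => if x ≤ 1/2 then 2 * g (2*x) else 0)
      (volume.restrict (Set.Icc (0:ℝ) 1))) :
    ∫ x, (if x ≤ 1/2 then 2 * g (2*x) else 0) ∂(volume.restrict (Set.Icc (0:ℝ) 1))
      = ∫ x, g x ∂(volume.restrict (Set.Icc (0:ℝ) 1)) := by
  set h : ℝ → ℝ := fun x => if x ≤ 1/2 then 2 * g (2*x) else 0 with hh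
  have hIcc : Set.Icc (0:ℝ) 1 = Set.Icc 0 (1/2) ∪ Set.Ioc (1/2) 1 :=
    (Set.Icc_union_Ioc_eq_Icc (by norm_num) (by norm_num)).symm
  have hdisj : Disjoint (Set.Icc (0:ℝ) (1/2)) (Set.Ioc (1/2) 1) := by
    rw [Set.disjoint_left]
    rintro a ⟨_, h2⟩ ⟨h3, _⟩
    linarith
  have hInt' : IntegrableOn h (Set.Icc (0:ℝ) 1) volume := hInt
  have h1 : IntegrableOn h (Set.Icc (0:ℝ) (1/2)) volume :=
    hInt'.mono_set (by rw [hIcc]; exact Set.subset_union_left)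
  have h2 : IntegrableOn h (Set.Ioc (1/2:ℝ) 1) volume :=
    hInt'.mono_set (by rw [hIcc]; exact Set.subset_union_right)
  have key : ∫ x, h x ∂(volume.restrict (Set.Icc (0:ℝ) 1)) =
      (∫ x in Set.Icc (0:ℝ) (1/2), h x) + ∫ x in Set.Ioc (1/2:ℝ) 1, h x := by
    rw [hIcc]
    exact setIntegral_union hdisj measurableSet_Ioc h1 h2
  have hzero : ∫ x in Set.Ioc (1/2:ℝ) 1, h x = 0 := by
    rw [setIntegral_congr_fun measurableSet_Ioc
      (fun x hx => show h x = (0:ℝ) from if_neg (not_le.2 hx.1))]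
    simp
  have hleft : ∫ x in Set.Icc (0:ℝ) (1/2), h x = 2 * ∫ x in Set.Icc (0:ℝ) (1/2), g (2*x) := by
    rw [setIntegral_congr_fun measurableSet_Icc
      (fun x hx => show h x = (2:ℝ) * g (2*x) from if_pos hx.2), integral_const_mul]
  have hchange : ∫ x in Set.Icc (0:ℝ) (1/2), g (2*x) = 2⁻¹ * ∫ x in Set.Icc (0:ℝ) 1, g x := by
    rw [integral_Icc_eq_integral_Ioc, integral_Icc_eq_integral_Ioc,
      ← intervalIntegral.integral_of_le (by norm_num : (0:ℝ) ≤ 1/2),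
      ← intervalIntegral.integral_of_le (by norm_num : (0:ℝ) ≤ 1),
      intervalIntegral.integral_comp_mul_left g (two_ne_zero)]
    norm_num
  rw [key, hzero, hleft, hchange]
  ring

set_option maxHeartbeats 1000000 in
set_option synthInstance.maxHeartbeats 200000 in

lemma exp_split {μ : Measure ℝ} (P : Lp ℝ 1 μ →L[ℝ] Lp ℝ 1 μ) (t : ℝ) :
    NormedSpace.exp (t • ((1 : Lp ℝ 1 μ →L[ℝ] Lp ℝ 1 μ) - P)) =
      Real.exp t • NormedSpace.exp ((-t) • P) := by
  have hcomm : Commute (t • (1 : Lp ℝ 1 μ →L[ℝ] Lp ℝ 1 μ)) ((-t) • P) := by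
    unfold Commute SemiconjBy
    rw [smul_mul_assoc, one_mul, mul_smul_comm, mul_one]
  have hsplit : t • ((1 : Lp ℝ 1 μ →L[ℝ] Lp ℝ 1 μ) - P) = t • 1 + (-t) • P := by
    rw [smul_sub, sub_eq_add_neg, neg_smul]
  rw [hsplit, NormedSpace.exp_add_of_commute_of_mem_ball (𝕂 := ℝ) hcomm
    ((NormedSpace.expSeries_radius_eq_top ℝ (Lp ℝ 1 μ →L[ℝ] Lp ℝ 1 μ)).symm ▸ edist_lt_top _ _)
    ((NormedSpace.expSeries_radius_eq_top ℝ (Lp ℝ 1 μ →L[ℝ] Lp ℝ 1 μ)).symm ▸ edist_lt_top _ _)]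
  have h1 : (t • (1 : Lp ℝ 1 μ →L[ℝ] Lp ℝ 1 μ)) = algebraMap ℝ _ t :=
    (Algebra.algebraMap_eq_smul_one t).symm
  rw [h1, ← NormedSpace.algebraMap_exp_comm, ← Real.exp_eq_exp_ℝ,
    Algebra.algebraMap_eq_smul_one, smul_mul_assoc, one_mul]


set_option maxHeartbeats 1000000 in
set_option synthInstance.maxHeartbeats 200000 in
lemma key_ae {μ : Measure ℝ} (P : Lp ℝ 1 μ →L[ℝ] Lp ℝ 1 μ) (fInd : Lp ℝ 1 μ)
    (hPk : ∀ k : ℕ, ((P ^ k) fInd : ℝ → ℝ) =ᵐ[μ]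
      (Set.Ioc (((2:ℝ) ^ (k+1))⁻¹) (((2:ℝ) ^ k)⁻¹)).indicator (fun _ => (2:ℝ) ^ k))
    (t : ℝ) (k : ℕ) :
    ∀ᵐ x ∂μ, x ∈ Set.Ioc (((2:ℝ) ^ (k+1))⁻¹) (((2:ℝ) ^ k)⁻¹) →
      ((NormedSpace.exp (t • ((1 : Lp ℝ 1 μ →L[ℝ] Lp ℝ 1 μ) - P))) fInd : ℝ → ℝ) x =
        Real.exp t * ((-t) ^ k * 2 ^ k / (Nat.factorial k : ℝ)) := by
  classical
  set c : ℕ → ℝ := fun n => ((Nat.factorial n : ℝ))⁻¹ * (-t) ^ n with hc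
  set g : ℕ → Lp ℝ 1 μ := fun n => ((Nat.factorial n : ℝ))⁻¹ • ((-t) ^ n • ((P ^ n) fInd)) with hg
  set S : Lp ℝ 1 μ := (NormedSpace.exp ((-t) • P)) fInd with hS
  have hs : HasSum (fun n : ℕ => ((Nat.factorial n : ℝ))⁻¹ • ((-t) • P) ^ n)
      (NormedSpace.exp ((-t) • P)) := NormedSpace.exp_series_hasSum_exp' _
  have hs2 : HasSum g S := by
    have h := hs.mapL (ContinuousLinearMap.apply ℝ (Lp ℝ 1 μ) fInd)
    refine HasSum.congr_fun h fun n => ?_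
    simp only [hg, ContinuousLinearMap.apply_apply, ContinuousLinearMap.smul_apply, smul_pow]
  have htend : Tendsto (fun N => ∑ n ∈ Finset.range N, g n) atTop (𝓝 S) :=
    hs2.tendsto_sum_nat
  have hmeas : TendstoInMeasure μ (fun N => ⇑(∑ n ∈ Finset.range N, g n)) atTop S :=
    MeasureTheory.tendstoInMeasure_of_tendsto_Lp htend
  obtain ⟨ns, hmono, hae⟩ := hmeas.exists_seq_tendsto_ae
  -- identify the partial sums a.e.
  have hgn : ∀ n : ℕ, ⇑(g n) =ᵐ[μ] fun x =>
      c n * (Set.Ioc (((2:ℝ) ^ (n+1))⁻¹) (((2:ℝ) ^ n)⁻¹)).indicator (fun _ => (2:ℝ) ^ n) x := by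
    intro n
    refine (Lp.coeFn_smul _ _).trans ?_
    filter_upwards [Lp.coeFn_smul ((-t) ^ n) ((P ^ n) fInd), hPk n] with x h1 h2
    simp only [Pi.smul_apply, h1, h2, smul_eq_mul, hc]
    ring
  have hrep : ∀ᵐ x ∂μ, ∀ n : ℕ, (g n : ℝ → ℝ) x =
      c n * (Set.Ioc (((2:ℝ) ^ (n+1))⁻¹) (((2:ℝ) ^ n)⁻¹)).indicator (fun _ => (2:ℝ) ^ n) x :=
    ae_all_iff.2 hgn
  have hsumrep : ∀ᵐ x ∂μ, ∀ N : ℕ, ⇑(∑ n ∈ Finset.range N, g n) x =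
      ∑ n ∈ Finset.range N, (g n : ℝ → ℝ) x :=
    ae_all_iff.2 fun N => Lp_coeFn_sum g (Finset.range N)
  have hsm : (NormedSpace.exp (t • ((1 : Lp ℝ 1 μ →L[ℝ] Lp ℝ 1 μ) - P))) fInd =
      Real.exp t • S := by rw [exp_split, ContinuousLinearMap.smul_apply]
  have hcoe : ⇑((NormedSpace.exp (t • ((1 : Lp ℝ 1 μ →L[ℝ] Lp ℝ 1 μ) - P))) fInd)
      =ᵐ[μ] Real.exp t • ⇑S := by rw [hsm]; exact Lp.coeFn_smul _ _
  filter_upwards [hae, hrep, hsumrep, hcoe] with x hx hrx hsx hcx hmem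
  have hev : (fun i => ⇑(∑ n ∈ Finset.range (ns i), g n) x) =ᶠ[atTop]
      (fun _ => c k * 2 ^ k) := by
    filter_upwards [eventually_ge_atTop (k+1)] with i hi
    rw [hsx (ns i)]
    have hki : k < ns i := lt_of_lt_of_le hi (hmono.le_apply)
    calc ∑ n ∈ Finset.range (ns i), (g n : ℝ → ℝ) x
        = ∑ n ∈ Finset.range (ns i), c n *
          (Set.Ioc (((2:ℝ) ^ (n+1))⁻¹) (((2:ℝ) ^ n)⁻¹)).indicator (fun _ => (2:ℝ) ^ n) x :=
          Finset.sum_congr rfl fun n _ => hrx n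
      _ = c k * 2 ^ k := sum_ind c k (ns i) hki x hmem
  have hlim : Tendsto (fun i => ⇑(∑ n ∈ Finset.range (ns i), g n) x) atTop
      (𝓝 (c k * 2 ^ k)) := Tendsto.congr' hev.symm tendsto_const_nhds
  have hSx : S x = c k * 2 ^ k := tendsto_nhds_unique hx hlim
  rw [hcx]
  simp only [Pi.smul_apply, hSx, smul_eq_mul, hc]
  have hfac : ((Nat.factorial k : ℝ)) ≠ 0 := Nat.cast_ne_zero.2 (Nat.factorial_ne_zero k)
  field_simp

/-- A stochastic (Markov) operator on `L¹`. -/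
def IsStochasticOperator {X : Type*} [MeasurableSpace X] (m : Measure X)
    (P : Lp ℝ 1 m →L[ℝ] Lp ℝ 1 m) : Prop :=
  (∀ f : Lp ℝ 1 m, 0 ≤ f → 0 ≤ P f) ∧
  (∀ f : Lp ℝ 1 m, ∫ x, (P f : X → ℝ) x ∂m = ∫ x, (f : X → ℝ) x ∂m)

/-- **A generator satisfying `∫ Af dm = 0` need not generate a positive semigroup.**
On `L¹([0,1])` let `Pf(x) = 2f(2x)` for `x ∈ [0,1/2]` and `Pf(x) = 0` otherwise.  Then `P`
is a stochastic operator, so `A = I − P` satisfies `∫ Af dm = 0` for every `f`; nevertheless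
the semigroup `T(t) = e^{tA}` is not positive: for `f = 1_{(1/2,1]}` one has
`Pᵏf = 2ᵏ 1_{(2^{−k−1},2^{−k}]}`, hence `T(t)f = e^t·(−t)ᵏ2ᵏ/k!` a.e. on
`(2^{−k−1},2^{−k}]`, which is `< 0` for `t > 0` and odd `k`; in particular `T(t)f < 0` on a
set of positive measure for each `t > 0`. -/
theorem exp_of_integral_preserving_generator_not_positive
    (μ : Measure ℝ) (hμ : μ = volume.restrict (Set.Icc (0:ℝ) 1))
    (P : Lp ℝ 1 μ →L[ℝ] Lp ℝ 1 μ)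
    (hP : ∀ f : Lp ℝ 1 μ, ∀ᵐ x ∂μ,
      (P f : ℝ → ℝ) x = if x ≤ 1/2 then 2 * (f : ℝ → ℝ) (2 * x) else 0)
    (fInd : Lp ℝ 1 μ)
    (hfInd : (fInd : ℝ → ℝ) =ᵐ[μ] Set.indicator (Set.Ioc (1/2 : ℝ) 1) (fun _ => (1:ℝ))) :
    IsStochasticOperator μ P ∧
    (∀ f : Lp ℝ 1 μ, ∫ x, (((1 : Lp ℝ 1 μ →L[ℝ] Lp ℝ 1 μ) - P) f : ℝ → ℝ) x ∂μ = 0) ∧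
    (∀ k : ℕ, ((P ^ k) fInd : ℝ → ℝ) =ᵐ[μ]
      Set.indicator (Set.Ioc (((2:ℝ) ^ (k+1))⁻¹) (((2:ℝ) ^ k)⁻¹)) (fun _ => (2:ℝ) ^ k)) ∧
    (∀ t : ℝ, 0 < t → ∀ k : ℕ,
      (∀ᵐ x ∂μ, x ∈ Set.Ioc (((2:ℝ) ^ (k+1))⁻¹) (((2:ℝ) ^ k)⁻¹) →
        ((NormedSpace.exp (t • ((1 : Lp ℝ 1 μ →L[ℝ] Lp ℝ 1 μ) - P))) fInd : ℝ → ℝ) x =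
          Real.exp t * ((-t) ^ k * 2 ^ k / (Nat.factorial k : ℝ))) ∧
      (Odd k → Real.exp t * ((-t) ^ k * 2 ^ k / (Nat.factorial k : ℝ)) < 0)) ∧
    (∀ t : ℝ, 0 < t →
      0 < μ {x : ℝ |
        ((NormedSpace.exp (t • ((1 : Lp ℝ 1 μ →L[ℝ] Lp ℝ 1 μ) - P))) fInd : ℝ → ℝ) x < 0}) := by
  subst hμ
  -- Part C: the powers of P on fInd
  have hC : ∀ k : ℕ, ((P ^ k) fInd : ℝ → ℝ) =ᵐ[volume.restrict (Set.Icc (0:ℝ) 1)]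
      Set.indicator (Set.Ioc (((2:ℝ) ^ (k+1))⁻¹) (((2:ℝ) ^ k)⁻¹)) (fun _ => (2:ℝ) ^ k) := by
    intro k
    induction k with
    | zero =>
      rw [pow_zero, ContinuousLinearMap.one_apply]
      refine hfInd.trans (Filter.EventuallyEq.of_eq ?_)
      norm_num
    | succ k ih =>
      have h1 := hP ((P ^ k) fInd)
      have h2 := ae_double (Q := fun y =>
        ((P ^ k) fInd : ℝ → ℝ) y = Set.indicator
          (Set.Ioc (((2:ℝ) ^ (k+1))⁻¹) (((2:ℝ) ^ k)⁻¹)) (fun _ => (2:ℝ) ^ k) y) ih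
      have h3 : (P ^ (k+1)) fInd = P ((P ^ k) fInd) := by
        rw [pow_succ', ContinuousLinearMap.mul_apply]
      filter_upwards [h1, h2] with x hx1 hx2
      rw [h3, hx1]
      have : (if x ≤ 1/2 then 2 * ((P ^ k) fInd : ℝ → ℝ) (2*x) else 0)
          = (if x ≤ 1/2 then 2 * Set.indicator
              (Set.Ioc (((2:ℝ) ^ (k+1))⁻¹) (((2:ℝ) ^ k)⁻¹)) (fun _ => (2:ℝ) ^ k) (2*x)
            else 0) := by
        by_cases hle : x ≤ 1/2
        · rw [if_pos hle, if_pos hle, hx2 hle]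
        · rw [if_neg hle, if_neg hle]
      rw [this, ind_step k x]
  -- Part A.2: integral preservation
  have hint : ∀ f : Lp ℝ 1 (volume.restrict (Set.Icc (0:ℝ) 1)),
      ∫ x, (P f : ℝ → ℝ) x ∂(volume.restrict (Set.Icc (0:ℝ) 1)) =
        ∫ x, (f : ℝ → ℝ) x ∂(volume.restrict (Set.Icc (0:ℝ) 1)) := by
    intro f
    rw [integral_congr_ae (hP f)]
    exact integral_ite _ ((L1.integrable_coeFn (P f)).congr (hP f))
  -- Part A.1: positivity
  have hpos : ∀ f, 0 ≤ f → 0 ≤ P f := by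
    intro f hf
    refine (Lp.coeFn_nonneg _).1 ?_
    have hf' : (0 : ℝ → ℝ) ≤ᵐ[volume.restrict (Set.Icc (0:ℝ) 1)] ⇑f :=
      (Lp.coeFn_nonneg f).2 hf
    have h2 := ae_double (Q := fun y => (0:ℝ) ≤ ⇑f y) hf'
    filter_upwards [hP f, h2] with x h1 h2'
    simp only [Pi.zero_apply]
    rw [h1]
    split
    · next hle => exact mul_nonneg (by norm_num) (h2' hle)
    · exact le_refl 0
  refine ⟨⟨hpos, hint⟩, ?_, hC, ?_, ?_⟩
  -- Part B
  · intro f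
    have hsub : ((1 : Lp ℝ 1 (volume.restrict (Set.Icc (0:ℝ) 1)) →L[ℝ] Lp ℝ 1 (volume.restrict (Set.Icc (0:ℝ) 1))) - P) f = f - P f := by
      rw [ContinuousLinearMap.sub_apply, ContinuousLinearMap.one_apply]
    rw [hsub, integral_congr_ae (Lp.coeFn_sub f (P f))]
    have := integral_sub (L1.integrable_coeFn f) (L1.integrable_coeFn (P f))
    simp only [Pi.sub_apply] at this ⊢
    rw [this, hint f, sub_self]
  -- Part D
  · intro t ht k
    refine ⟨key_ae P fInd hC t k, ?_⟩
    intro hodd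
    have hneg : (-t) ^ k = -(t ^ k) := Odd.neg_pow hodd t
    rw [hneg]
    have h1 : (0:ℝ) < t ^ k := pow_pos ht k
    have h2 : (0:ℝ) < (2:ℝ) ^ k := by positivity
    have h3 : (0:ℝ) < (Nat.factorial k : ℝ) := by
      exact_mod_cast Nat.factorial_pos k
    have h4 : -(t ^ k) * 2 ^ k / (Nat.factorial k : ℝ) < 0 := by
      apply div_neg_of_neg_of_pos _ h3
      nlinarith
    exact mul_neg_of_pos_of_neg (Real.exp_pos t) h4
  -- Part E
  · intro t ht
    have hD := key_ae P fInd hC t 1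
    have hvneg : Real.exp t * ((-t) ^ 1 * 2 ^ 1 / (Nat.factorial 1 : ℝ)) < 0 := by
      simp only [pow_one, Nat.factorial_one, Nat.cast_one, div_one]
      nlinarith [Real.exp_pos t]
    rw [Filter.eventually_iff, MeasureTheory.mem_ae_iff] at hD
    have hsub : Set.Ioc (((2:ℝ) ^ (1+1))⁻¹) (((2:ℝ) ^ 1)⁻¹) ∩
        {x | x ∈ Set.Ioc (((2:ℝ) ^ (1+1))⁻¹) (((2:ℝ) ^ 1)⁻¹) →
          ((NormedSpace.exp (t • ((1 : Lp ℝ 1 (volume.restrict (Set.Icc (0:ℝ) 1)) →L[ℝ] Lp ℝ 1 (volume.restrict (Set.Icc (0:ℝ) 1))) - P))) fInd : ℝ → ℝ) x = Real.exp t * ((-t) ^ 1 * 2 ^ 1 / (Nat.factorial 1 : ℝ))}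
        ⊆ {x : ℝ | ((NormedSpace.exp (t • ((1 : Lp ℝ 1 (volume.restrict (Set.Icc (0:ℝ) 1)) →L[ℝ] Lp ℝ 1 (volume.restrict (Set.Icc (0:ℝ) 1))) - P))) fInd : ℝ → ℝ) x < 0} := by
      rintro x ⟨h1, h2⟩
      rw [Set.mem_setOf_eq, h2 h1]
      exact hvneg
    refine lt_of_lt_of_le ?_ (measure_mono hsub)
    rw [measure_inter_conull hD]
    rw [Measure.restrict_apply' measurableSet_Icc]
    have hJI : Set.Ioc (((2:ℝ) ^ (1+1))⁻¹) (((2:ℝ) ^ 1)⁻¹) ∩ Set.Icc (0:ℝ) 1 =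
        Set.Ioc (((2:ℝ) ^ (1+1))⁻¹) (((2:ℝ) ^ 1)⁻¹) := by
      apply Set.inter_eq_left.2
      rintro x ⟨h1, h2⟩
      norm_num at h1 h2 ⊢
      constructor <;> linarith
    rw [hJI, Real.volume_Ioc]
    norm_num
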